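/- For any sequence s ∈ l¹(ℤ²), any ξ ∈ ℝ², and any l ∈ ℤ², the 2D discrete-time non-separable LCT of s satisfies (L_M s)(ξ + Bl) = (L_M s)(ξ) · e^{iπ (Bl)ᵀDB⁻¹ξ + iπ ξᵀDl + iπ (Bl)ᵀDl}. In particular |(L_M s)(ξ + Bl)| = |(L_M s)(ξ)|, i.e., |L_M s| is periodic with periodicity matrix B. -/

import Mathlib

open MeasureTheory Matrix Complex

noncomputable section

abbrev V2 : Type := Fin 2 → ℝ
abbrev Z2 : Type := Fin 2 → ℤ
abbrev M2 : Type := Matrix (Fin 2) (Fin 2) ℝ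

/-- cast an integer vector to a real vector -/
def zc (k : Z2) : V2 := fun i => (k i : ℝ)

/-- `ePi r = e^{iπ r}` -/
def ePi (r : ℝ) : ℂ := Complex.exp (Real.pi * Complex.I * r)

/-- quadratic/bilinear form `xᵀ P y` -/
def Q (P : M2) (x y : V2) : ℝ := x ⬝ᵥ P.mulVec y

/-- `√(det (iB))` (note `det(iB) = i² det B` for 2×2 `B`) -/
def sdet (B : M2) : ℂ := ((Complex.I ^ 2 * (B.det : ℂ))) ^ ((1 : ℂ)/2)

/-- the chirp `λ_M(t) = e^{iπ tᵀB⁻¹At}` -/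
def lam (A B : M2) (t : V2) : ℂ := ePi (Q (B⁻¹ * A) t t)

/-- the continuous 2D non-separable LCT -/
def LCT (A B D : M2) (f : V2 → ℂ) (ξ : V2) : ℂ :=
  (sdet B)⁻¹ * ∫ u : V2, f u * ePi (Q (B⁻¹ * A) u u - 2 * Q B⁻¹ u ξ + Q (D * B⁻¹) ξ ξ)

/-- the 2D discrete-time non-separable LCT -/
def DLCT (A B D : M2) (s : Z2 → ℂ) (ξ : V2) : ℂ :=
  (sdet B)⁻¹ * ∑' k : Z2,
    s k * ePi (Q (B⁻¹ * A) (zc k) (zc k) - 2 * Q B⁻¹ (zc k) ξ + Q (D * B⁻¹) ξ ξ)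

/-- the canonical (continuous) convolution `⋆_c` -/
def cconv (A B : M2) (f g : V2 → ℂ) (t : V2) : ℂ :=
  ePi (-(Q (B⁻¹ * A) t t)) * (sdet B)⁻¹ *
    ∫ x : V2, lam A B (t - x) * f (t - x) * (lam A B x * g x)

/-- the canonical semi-discrete convolution `⋆_{sd}` -/
def sdconv (A B : M2) (s : Z2 → ℂ) (g : V2 → ℂ) (t : V2) : ℂ :=
  ePi (-(Q (B⁻¹ * A) t t)) * (sdet B)⁻¹ *
    ∑' k : Z2, lam A B (zc k) * s k * (lam A B (t - zc k) * g (t - zc k))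

/-- the canonical discrete convolution `⋆_d` -/
def dconv (A B : M2) (s c : Z2 → ℂ) (l : Z2) : ℂ :=
  ePi (-(Q (B⁻¹ * A) (zc l) (zc l))) * (sdet B)⁻¹ *
    ∑' k : Z2, lam A B (zc k) * s k * (lam A B (zc (l - k)) * c (l - k))

/-- symplecticity of the block matrix `[A,B;C,D]` -/
def Symp (A B C D : M2) : Prop :=
  A * Bᵀ = B * Aᵀ ∧ C * Dᵀ = D * Cᵀ ∧ A * Dᵀ - B * Cᵀ = 1

/-- the unit half-open square `[0,1)²` -/
def box : Set V2 := Set.univ.pi fun _ => Set.Ico (0:ℝ) 1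

/-- real cast of an integer matrix -/
def Mr (M : Matrix (Fin 2) (Fin 2) ℤ) : M2 := M.map (Int.cast : ℤ → ℝ)

/-- the set `N(M)` of integer points in the fundamental parallelepiped -/
def NM (M : Matrix (Fin 2) (Fin 2) ℤ) : Set Z2 :=
  {k : Z2 | ∃ x : V2, x ∈ box ∧ zc k = (Mr M).mulVec x}

/-- the discrete time Fourier transform -/
def DTFT (d : Z2 → ℂ) (ξ : V2) : ℂ := ∑' k : Z2, d k * ePi (-(2 * (zc k ⬝ᵥ ξ)))


lemma ePi_add (a b : ℝ) : ePi (a + b) = ePi a * ePi b := by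
  rw [ePi, ePi, ePi, ← Complex.exp_add]
  congr 1
  push_cast
  ring

lemma ePi_neg_two_int (n : ℤ) : ePi (-(2 * (n : ℝ))) = 1 := by
  have : (Real.pi : ℂ) * Complex.I * ((-(2 * (n : ℝ)) : ℝ) : ℂ)
      = ((-n : ℤ) : ℂ) * (2 * Real.pi * Complex.I) := by push_cast; ring
  rw [ePi, this, Complex.exp_int_mul_two_pi_mul_I]

lemma ePi_norm (r : ℝ) : ‖ePi r‖ = 1 := by
  rw [ePi, Complex.norm_exp]
  simp

/-- Quasi-periodicity of the 2D-DT-NS-LCT: for any `l ∈ ℤ²`,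
`(L_M s)(ξ + Bl) = (L_M s)(ξ) e^{iπ[(Bl)ᵀDB⁻¹ξ + ξᵀDl + (Bl)ᵀDl]}`, hence
`|L_M s|` is periodic with periodicity matrix `B`. -/
theorem dlct_periodic (A B C D : M2) (hSymp : Symp A B C D) (hB : B.det ≠ 0)
    (hBD : Bᵀ * D = Dᵀ * B) (s : Z2 → ℂ) (hs : Summable fun k => ‖s k‖) :
    ∀ (ξ : V2) (l : Z2),
      (DLCT A B D s (ξ + B.mulVec (zc l)) =
        DLCT A B D s ξ *
          ePi (Q (D * B⁻¹) (B.mulVec (zc l)) ξ + Q D ξ (zc l) +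
               Q D (B.mulVec (zc l)) (zc l))) ∧
      ‖DLCT A B D s (ξ + B.mulVec (zc l))‖ = ‖DLCT A B D s ξ‖ := by
  intro ξ l
  have hBu : IsUnit B.det := isUnit_iff_ne_zero.2 hB
  have hinv : B⁻¹ * B = 1 := Matrix.nonsing_inv_mul B hBu
  have h1 : B⁻¹.mulVec (B.mulVec (zc l)) = zc l := by
    rw [Matrix.mulVec_mulVec, hinv, Matrix.one_mulVec]
  have h2 : (D * B⁻¹).mulVec (B.mulVec (zc l)) = D.mulVec (zc l) := by
    rw [Matrix.mulVec_mulVec, mul_assoc, hinv, mul_one]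
  set Δ : ℝ := Q (D * B⁻¹) (B.mulVec (zc l)) ξ + Q D ξ (zc l) +
      Q D (B.mulVec (zc l)) (zc l) with hΔ
  have hdot : ∀ k : Z2, zc k ⬝ᵥ zc l = ((k ⬝ᵥ l : ℤ) : ℝ) := by
    intro k
    simp [zc, dotProduct]
  have key : ∀ k : Z2,
      s k * ePi (Q (B⁻¹ * A) (zc k) (zc k) - 2 * Q B⁻¹ (zc k) (ξ + B.mulVec (zc l)) +
        Q (D * B⁻¹) (ξ + B.mulVec (zc l)) (ξ + B.mulVec (zc l)))
      = (s k * ePi (Q (B⁻¹ * A) (zc k) (zc k) - 2 * Q B⁻¹ (zc k) ξ +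
          Q (D * B⁻¹) ξ ξ)) * ePi Δ := by
    intro k
    have hE : Q (B⁻¹ * A) (zc k) (zc k) - 2 * Q B⁻¹ (zc k) (ξ + B.mulVec (zc l)) +
        Q (D * B⁻¹) (ξ + B.mulVec (zc l)) (ξ + B.mulVec (zc l))
        = (Q (B⁻¹ * A) (zc k) (zc k) - 2 * Q B⁻¹ (zc k) ξ + Q (D * B⁻¹) ξ ξ + Δ)
          + (-(2 * (zc k ⬝ᵥ zc l))) := by
      simp only [Q, hΔ, Matrix.mulVec_add, dotProduct_add,
        add_dotProduct, h1, h2]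
      ring
    rw [hE, ePi_add, ePi_add, hdot k, ePi_neg_two_int, mul_one]
    ring
  have hmain : DLCT A B D s (ξ + B.mulVec (zc l)) = DLCT A B D s ξ * ePi Δ := by
    unfold DLCT
    rw [tsum_congr key, tsum_mul_right]
    ring
  exact ⟨hmain, by rw [hmain, norm_mul, ePi_norm, mul_one]⟩
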